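/- If X is a subset of the real line and ℝ \ X contains an open interval of length 2d, then the Gromov–Hausdorff distance between ℝ and X is at least d. -/

import Mathlib

open scoped ENNReal NNReal

/-- A correspondence between `X` and `Y`: a relation whose projections are surjective. -/
def IsCorrespondence {X Y : Type*} (R : Set (X × Y)) : Prop :=
  (∀ x : X, ∃ y : Y, (x, y) ∈ R) ∧ (∀ y : Y, ∃ x : X, (x, y) ∈ R)

/-- The distortion of a relation between two (pseudo)metric spaces. -/
noncomputable def corrDis {X Y : Type*} [PseudoMetricSpace X] [PseudoMetricSpace Y]
    (R : Set (X × Y)) : ℝ≥0∞ :=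
  ⨆ p ∈ R, ⨆ q ∈ R, ENNReal.ofReal |dist (Prod.fst p) (Prod.fst q) - dist (Prod.snd p) (Prod.snd q)|

/-- The (generalized) Gromov–Hausdorff distance: half the infimum of distortions of
correspondences, valued in `[0, ∞]`. -/
noncomputable def ghDist (X Y : Type*) [PseudoMetricSpace X] [PseudoMetricSpace Y] : ℝ≥0∞ :=
  (⨅ R ∈ {R : Set (X × Y) | IsCorrespondence R}, corrDis R) / 2

/-- The space `X` with all distances multiplied by `lam`. -/
noncomputable def scaled (lam : ℝ≥0) (X : Type*) [PseudoMetricSpace X] :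
    PseudoMetricSpace X where
  dist x y := lam * dist x y
  dist_self x := by simp
  dist_comm x y := by simp [dist_comm]
  dist_triangle x y z := by
    have h := dist_triangle x y z
    have := mul_le_mul_of_nonneg_left h lam.coe_nonneg
    simpa [mul_add] using this

-- crossing lemma: a function g : ℕ → ℝ avoiding the gap, with small jumps, can't cross
lemma crossing (a d : ℝ) (hd : 0 < d) (g : ℕ → ℝ) (n : ℕ)
    (hgap : ∀ i, g i ≤ a - d ∨ a + d ≤ g i)
    (hjump : ∀ i, |g (i + 1) - g i| < 2 * d)
    (h0 : g 0 ≤ a - d) (hn : a + d ≤ g n) : False := by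
  classical
  have hP : ∃ i, a + d ≤ g i := ⟨n, hn⟩
  set m := Nat.find hP with hm
  have hspec : a + d ≤ g m := Nat.find_spec hP
  have hm0 : m ≠ 0 := by
    intro h0'
    rw [h0'] at hspec
    linarith
  have hmin : ¬ a + d ≤ g (m - 1) := Nat.find_min hP (by omega)
  have hlow : g (m - 1) ≤ a - d := by
    rcases hgap (m - 1) with h' | h'
    · exact h'
    · exact absurd h' hmin
  have hj := hjump (m - 1)
  have he : m - 1 + 1 = m := by omega
  rw [he] at hj
  have := le_abs_self (g m - g (m - 1))
  linarith

lemma walk (a d D : ℝ) (hd : 0 < d) (hD0 : 0 ≤ D) (hD : D < 2 * d)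
    (f : ℝ → ℝ) (key : ∀ s t : ℝ, abs (|s - t| - |f s - f t|) ≤ D)
    (hgap : ∀ t : ℝ, f t ≤ a - d ∨ a + d ≤ f t)
    (s t : ℝ) (hs : f s ≤ a - d) (ht : a + d ≤ f t) : False := by
  set δ : ℝ := d - D / 2 with hδdef
  have hδ : 0 < δ := by simp [hδdef]; linarith
  obtain ⟨n, hn⟩ := exists_nat_ge (|t - s| / δ)
  set step : ℝ := (t - s) / (n + 1) with hstepdef
  have hnpos : (0:ℝ) < n + 1 := by positivity
  have hstep : |step| ≤ δ := by
    rw [hstepdef, abs_div, abs_of_pos hnpos, div_le_iff₀ hnpos]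
    have h1 : |t - s| ≤ n * δ := (div_le_iff₀ hδ).mp hn
    nlinarith [abs_nonneg (t - s)]
  set g : ℕ → ℝ := fun i => f (s + i * step) with hgdef
  have hg0 : g 0 = f s := by simp [hgdef]
  have hgn : g (n + 1) = f t := by
    have : s + ((n : ℝ) + 1) * step = t := by
      rw [hstepdef]
      field_simp
      ring
    simp only [hgdef]
    push_cast
    rw [this]
  apply crossing a d hd g (n + 1) (fun i => hgap _)
  · intro i
    have hk := key (s + (i + 1 : ℕ) * step) (s + (i : ℕ) * step)
    have he : (s + ((i + 1 : ℕ) : ℝ) * step) - (s + (i : ℕ) * step) = step := by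
      push_cast; ring
    rw [he] at hk
    have h1 : |g (i + 1) - g i| ≤ |step| + D := by
      simp only [hgdef]
      cases abs_cases (|step| - |f (s + (↑i + 1) * step) - f (s + ↑i * step)|) with
      | inl h' => push_cast at hk ⊢; linarith [abs_nonneg (f (s + ((i:ℝ) + 1) * step) - f (s + (i:ℝ) * step))]
      | inr h' => push_cast at hk ⊢; linarith
    have hstep' : |step| ≤ d - D / 2 := hstep
    linarith
  · rw [hg0]; exact hs
  · rw [hgn]; exact ht

lemma opposite (a d D : ℝ) (hd : 0 < d) (hD0 : 0 ≤ D) (hD : D < 2 * d) (f : ℝ → ℝ)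
    (key : ∀ s t : ℝ, abs (|s - t| - |f s - f t|) ≤ D) :
    ∃ s t : ℝ, f s ≤ a - d ∧ a + d ≤ f t := by
  set b := f a with hb
  set M := |b - a| + D + 2 * d + 1 with hM
  have habs0 : (0:ℝ) ≤ |b - a| := abs_nonneg _
  have hba1 : b - a ≤ |b - a| := le_abs_self _
  have hba2 : a - b ≤ |b - a| := by
    have := neg_abs_le (b - a); linarith
  have hMpos : 0 < M := by rw [hM]; linarith
  have habs1 : |(a - M) - a| = M := by
    rw [show (a - M) - a = -M by ring, abs_neg, abs_of_pos hMpos]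
  have habs2 : |(a + M) - a| = M := by
    rw [show (a + M) - a = M by ring, abs_of_pos hMpos]
  have habs3 : |(a - M) - (a + M)| = 2 * M := by
    rw [show (a - M) - (a + M) = -(2 * M) by ring, abs_neg, abs_of_pos (by linarith)]
  have hk1 := key (a - M) a
  rw [habs1] at hk1
  have hk2 := key (a + M) a
  rw [habs2] at hk2
  have hk3 := key (a - M) (a + M)
  rw [habs3] at hk3
  obtain ⟨l1, r1⟩ := abs_le.mp hk1
  obtain ⟨l2, r2⟩ := abs_le.mp hk2
  have r3 : 2 * M - |f (a - M) - f (a + M)| ≤ D := (abs_le.mp hk3).2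
  rcases abs_cases (f (a - M) - b) with ⟨e1, p1⟩ | ⟨e1, p1⟩ <;>
    rcases abs_cases (f (a + M) - b) with ⟨e2, p2⟩ | ⟨e2, p2⟩
  · -- both high: contradiction
    exfalso
    have hΔ : |f (a - M) - f (a + M)| ≤ 2 * D :=
      abs_le.mpr ⟨by linarith, by linarith⟩
    rw [hM] at r3
    linarith
  · -- f(a-M) high, f(a+M) low
    exact ⟨a + M, a - M, by linarith, by linarith⟩
  · -- f(a-M) low, f(a+M) high
    exact ⟨a - M, a + M, by linarith, by linarith⟩
  · -- both low: contradiction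
    exfalso
    have hΔ : |f (a - M) - f (a + M)| ≤ 2 * D :=
      abs_le.mpr ⟨by linarith, by linarith⟩
    rw [hM] at r3
    linarith

/-- If the complement of `X ⊆ ℝ` contains an open interval of length `2d`, then
`d_GH(ℝ, X) ≥ d`. -/
theorem stmt7 (X : Set ℝ) (a d : ℝ) (hd : 0 < d)
    (h : Set.Ioo (a - d) (a + d) ⊆ Xᶜ) :
    ENNReal.ofReal d ≤ ghDist ℝ X := by
  rw [ghDist, ENNReal.le_div_iff_mul_le (Or.inl two_ne_zero) (Or.inl ENNReal.ofNat_ne_top)]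
  refine le_iInf₂ fun R hR => ?_
  by_contra hcon
  push_neg at hcon
  obtain ⟨h1, _⟩ := hR
  choose y hy using h1
  have hlt : corrDis R < ENNReal.ofReal (2 * d) := by
    rw [ENNReal.ofReal_mul (by norm_num : (0:ℝ) ≤ 2), ENNReal.ofReal_ofNat, mul_comm]
    exact hcon
  have hfin : corrDis R ≠ ⊤ := (hlt.trans_le le_top).ne
  set D := (corrDis R).toReal with hDdef
  have hD0 : 0 ≤ D := ENNReal.toReal_nonneg
  have hD : D < 2 * d := by
    have := (ENNReal.toReal_lt_toReal hfin ENNReal.ofReal_ne_top).mpr hlt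
    rwa [ENNReal.toReal_ofReal (by linarith)] at this
  have key : ∀ s t : ℝ, abs (|s - t| - |(y s : ℝ) - (y t : ℝ)|) ≤ D := by
    intro s t
    have hb : ENNReal.ofReal |dist s t - dist (y s) (y t)| ≤ corrDis R := by
      rw [corrDis]
      exact le_iSup₂_of_le (s, y s) (hy s) (le_iSup₂_of_le (t, y t) (hy t) le_rfl)
    have := ENNReal.toReal_mono hfin hb
    rw [ENNReal.toReal_ofReal (abs_nonneg _)] at this
    simpa [Real.dist_eq, Subtype.dist_eq] using this
  have gap : ∀ t : ℝ, (y t : ℝ) ≤ a - d ∨ a + d ≤ (y t : ℝ) := by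
    intro t
    by_contra hc
    push_neg at hc
    exact h ⟨hc.1, hc.2⟩ (y t).2
  obtain ⟨s, t, hs, ht⟩ := opposite a d D hd hD0 hD (fun t => (y t : ℝ)) key
  exact walk a d D hd hD0 hD (fun t => (y t : ℝ)) key gap s t hs ht
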